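/- Let R be a von Neumann regular ring. Then a right R-module M is a content module if and only if M is singly projective. -/

import Mathlib

universe u v

/-- For a subset `A` of `R` and a right `R`-module `M` (a module over `Rᵐᵒᵖ`), the additive
subgroup `M·A` of `M` generated by the products `m · a` with `a ∈ A`, `m ∈ M`. -/
def Set.rightSmulAddSubgroup {R : Type u} [Ring R] (A : Set R) (M : Type v) [AddCommGroup M]
    [Module Rᵐᵒᵖ M] : AddSubgroup M :=
  AddSubgroup.closure {y : M | ∃ a ∈ A, ∃ m : M, y = MulOpposite.op a • m}

/-- The content ideal `c(x)` of an element `x` of a right `R`-module `M`: the intersection of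
all left ideals `A` of `R` such that `x ∈ M·A`. -/
def contentSet (R : Type u) [Ring R] {M : Type v} [AddCommGroup M] [Module Rᵐᵒᵖ M] (x : M) :
    Set R :=
  ⋂ A ∈ {A : Ideal R | x ∈ Set.rightSmulAddSubgroup (A : Set R) M}, (A : Set R)

/-- A right `R`-module `M` is a content module if `x ∈ M·c(x)` for every `x ∈ M`. -/
def IsContentModule (R : Type u) [Ring R] (M : Type v) [AddCommGroup M] [Module Rᵐᵒᵖ M] :
    Prop :=
  ∀ x : M, x ∈ Set.rightSmulAddSubgroup (contentSet R x) M

/-- A right `R`-module `M` is singly projective if for every cyclic submodule `N` of `M` the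
inclusion `N → M` factors through a free right module. -/
def SinglyProjective (R : Type u) [Ring R] (M : Type v) [AddCommGroup M] [Module Rᵐᵒᵖ M] :
    Prop :=
  ∀ x : M, ∃ (ι : Type v) (φ : (Submodule.span Rᵐᵒᵖ ({x} : Set M)) →ₗ[Rᵐᵒᵖ] (ι →₀ R))
    (π : (ι →₀ R) →ₗ[Rᵐᵒᵖ] M), ∀ n : (Submodule.span Rᵐᵒᵖ ({x} : Set M)), π (φ n) = (n : M)


open MulOpposite in
private lemma rightSmul_mono' {R : Type u} [Ring R] {M : Type v} [AddCommGroup M]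
    [Module Rᵐᵒᵖ M] {A B : Set R} (h : A ⊆ B) :
    A.rightSmulAddSubgroup M ≤ B.rightSmulAddSubgroup M := by
  apply AddSubgroup.closure_mono
  rintro y ⟨a, ha, m, rfl⟩
  exact ⟨a, h ha, m, rfl⟩

private lemma mem_rightSmul_of' {R : Type u} [Ring R] {M : Type v} [AddCommGroup M]
    [Module Rᵐᵒᵖ M] {A : Set R} {g : R} (hg : g ∈ A) {x : M}
    (hx : MulOpposite.op g • x = x) : x ∈ A.rightSmulAddSubgroup M := by
  rw [← hx]; exact AddSubgroup.subset_closure ⟨g, hg, x, rfl⟩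

/-- von Neumann regular: a finitely generated left ideal has a right unit. -/
private lemma vnr_list' {R : Type u} [Ring R] (hvnr : ∀ a : R, ∃ b : R, a * b * a = a)
    (l : List R) :
    ∃ g ∈ Ideal.span {a | a ∈ l}, ∀ r ∈ Ideal.span {a | a ∈ l}, r * g = r := by
  induction l with
  | nil =>
    refine ⟨0, Submodule.zero_mem _, fun r hr => ?_⟩
    have he : {a : R | a ∈ ([] : List R)} = ∅ := by simp
    rw [he, Ideal.span_empty] at hr
    rw [(Submodule.mem_bot R).mp hr]
    simp
  | cons b l ih =>
    obtain ⟨g, hgmem, hg⟩ := ih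
    have hset : {a : R | a ∈ b :: l} = insert b {a | a ∈ l} := by
      ext a; simp [List.mem_cons]
    obtain ⟨t, ht⟩ := hvnr (b - b * g)
    set c := b - b * g with hc
    set k := t * c with hk
    set g' := g + k - g * k with hg'
    have hIle : Ideal.span {a | a ∈ l} ≤ Ideal.span {a | a ∈ b :: l} := by
      apply Ideal.span_mono; rw [hset]; exact Set.subset_insert _ _
    have hbmem : b ∈ Ideal.span {a | a ∈ b :: l} := by
      apply Ideal.subset_span; simp
    have hcmem : c ∈ Ideal.span {a | a ∈ b :: l} := by
      apply Submodule.sub_mem _ hbmem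
      exact Submodule.smul_mem _ b (hIle hgmem)
    have hkmem : k ∈ Ideal.span {a | a ∈ b :: l} := Submodule.smul_mem _ t hcmem
    refine ⟨g', ?_, ?_⟩
    · exact Submodule.sub_mem _ (Submodule.add_mem _ (hIle hgmem) hkmem)
        (Submodule.smul_mem _ g hkmem)
    · intro r hr
      rw [hset, Ideal.span_insert] at hr
      have hck : c * k = c := by rw [hk, ← mul_assoc, ht]
      have hbg' : b * g' = b := by
        have hbk : b * k = c + b * g * k := by
          have : b = c + b * g := by rw [hc]; noncomm_ring
          calc b * k = (c + b * g) * k := by rw [← this]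
          _ = c * k + b * g * k := by noncomm_ring
          _ = c + b * g * k := by rw [hck]
        rw [hg']
        calc b * (g + k - g * k) = b * g + b * k - b * g * k := by noncomm_ring
        _ = b * g + (c + b * g * k) - b * g * k := by rw [hbk]
        _ = b * g + c := by noncomm_ring
        _ = b := by rw [hc]; noncomm_ring
      have hIg' : ∀ u ∈ Ideal.span {a | a ∈ l}, u * g' = u := by
        intro u hu
        have hug : u * g = u := hg u hu
        rw [hg']
        calc u * (g + k - g * k) = u * g + u * k - (u * g) * k := by noncomm_ring
        _ = u + u * k - u * k := by rw [hug]
        _ = u := by noncomm_ring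
      obtain ⟨p, hp, q, hq, rfl⟩ := Submodule.mem_sup.mp hr
      obtain ⟨s, hs⟩ := Submodule.mem_span_singleton.mp hp
      have : p * g' = p := by
        rw [← hs, smul_eq_mul, mul_assoc, hbg']
      rw [add_mul, this, hIg' q hq]

/-- From membership in `M·A` extract a finite representation. -/
private lemma rightSmul_rep' {R : Type u} [Ring R] {M : Type v} [AddCommGroup M]
    [Module Rᵐᵒᵖ M] {A : Set R} {x : M} (hx : x ∈ A.rightSmulAddSubgroup M) :
    ∃ l : List (R × M), (∀ p ∈ l, p.1 ∈ A) ∧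
      x = (l.map fun p => MulOpposite.op p.1 • p.2).sum := by
  refine AddSubgroup.closure_induction ?_ ?_ ?_ ?_ hx
  · rintro y ⟨a, ha, m, rfl⟩
    exact ⟨[(a, m)], by simpa using ha, by simp⟩
  · exact ⟨[], by simp, by simp⟩
  · rintro y z - - ⟨ly, hly, rfl⟩ ⟨lz, hlz, rfl⟩
    refine ⟨ly ++ lz, ?_, by simp⟩
    intro p hp
    rcases List.mem_append.mp hp with h | h
    exacts [hly p h, hlz p h]
  · rintro y - ⟨l, hl, rfl⟩
    refine ⟨l.map fun p => (p.1, -p.2), ?_, ?_⟩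
    · intro p hp
      obtain ⟨q, hq, rfl⟩ := List.mem_map.mp hp
      exact hl q hq
    · induction l with
      | nil => simp
      | cons p l ih =>
        simp only [List.map_cons, List.sum_cons, neg_add,
          ih (fun q hq => hl q (List.mem_cons_of_mem p hq)), smul_neg]

/-- Key lemma: over a von Neumann regular ring, membership in `M·A` gives a right unit. -/
private lemma key_lemma' {R : Type u} [Ring R] {M : Type v} [AddCommGroup M]
    [Module Rᵐᵒᵖ M] (hvnr : ∀ a : R, ∃ b : R, a * b * a = a) {A : Set R} {x : M}
    (hx : x ∈ A.rightSmulAddSubgroup M) :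
    ∃ g : R, (∀ B : Ideal R, A ⊆ B → g ∈ B) ∧ MulOpposite.op g • x = x := by
  obtain ⟨l, hl, rfl⟩ := rightSmul_rep' hx
  obtain ⟨g, hgmem, hg⟩ := vnr_list' hvnr (l.map Prod.fst)
  have hsub : {a : R | a ∈ l.map Prod.fst} ⊆ A := by
    rintro a ha
    obtain ⟨p, hp, rfl⟩ := List.mem_map.mp ha
    exact hl p hp
  refine ⟨g, fun B hB => Ideal.span_le.mpr (hsub.trans hB) hgmem, ?_⟩
  rw [List.smul_sum, List.map_map]
  congr 1
  apply List.map_congr_left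
  intro p hp
  have hpg : p.1 * g = p.1 := hg p.1 (Ideal.subset_span (by simp; exact ⟨p.2, hp⟩))
  show MulOpposite.op g • (MulOpposite.op p.1 • p.2) = MulOpposite.op p.1 • p.2
  rw [← mul_smul, ← MulOpposite.op_mul, hpg]

private lemma mem_contentSet' {R : Type u} [Ring R] {M : Type v} [AddCommGroup M]
    [Module Rᵐᵒᵖ M] {x : M} {a : R} :
    a ∈ contentSet R x ↔
      ∀ B : Ideal R, x ∈ Set.rightSmulAddSubgroup (B : Set R) M → a ∈ B := by
  simp [contentSet]

set_option maxHeartbeats 1000000 in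
private lemma content_to_sp {R : Type u} [Ring R] {M : Type v} [AddCommGroup M]
    [Module Rᵐᵒᵖ M] (hvnr : ∀ a : R, ∃ b : R, a * b * a = a) (x : M)
    (h : x ∈ Set.rightSmulAddSubgroup (contentSet R x) M) :
    ∃ (ι : Type v) (φ : (Submodule.span Rᵐᵒᵖ ({x} : Set M)) →ₗ[Rᵐᵒᵖ] (ι →₀ R))
      (π : (ι →₀ R) →ₗ[Rᵐᵒᵖ] M),
      ∀ n : (Submodule.span Rᵐᵒᵖ ({x} : Set M)), π (φ n) = (n : M) := by
  classical
  obtain ⟨g, hgB, hgx⟩ := key_lemma' hvnr h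
  have hgc : g ∈ contentSet R x := by
    rw [mem_contentSet']
    intro B hB
    exact hgB B (fun a ha => (mem_contentSet'.mp ha) B hB)
  have hker : ∀ r : R, MulOpposite.op r • x = 0 → g * r = 0 := by
    intro r hr
    obtain ⟨t, ht⟩ := hvnr r
    set a := g - g * (r * t) with ha
    have h1 : MulOpposite.op (g * (r * t)) • x = 0 := by
      have h2 : MulOpposite.op (g * (r * t)) =
          MulOpposite.op t * MulOpposite.op r * MulOpposite.op g := by
        simp [mul_assoc]
      rw [h2, mul_smul, mul_smul, hgx, hr, smul_zero]
    have hax : MulOpposite.op a • x = x := by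
      rw [ha, MulOpposite.op_sub, sub_smul, hgx, h1, sub_zero]
    have hxa : x ∈ Set.rightSmulAddSubgroup ((Ideal.span {a} : Ideal R) : Set R) M :=
      mem_rightSmul_of' (A := ((Ideal.span {a} : Ideal R) : Set R))
        (Ideal.subset_span rfl) hax
    have hga : g ∈ Ideal.span {a} := mem_contentSet'.mp hgc _ hxa
    obtain ⟨s, hs⟩ := Submodule.mem_span_singleton.mp hga
    have har : a * r = 0 := by
      have hgr : g * (r * t) * r = g * r := by rw [mul_assoc, ht]
      calc a * r = g * r - g * (r * t) * r := by rw [ha]; noncomm_ring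
      _ = 0 := by rw [hgr, sub_self]
    calc g * r = s • a * r := by rw [hs]
    _ = s * (a * r) := by rw [smul_eq_mul, mul_assoc]
    _ = 0 := by rw [har, mul_zero]
  let π : (PUnit.{v+1} →₀ R) →ₗ[Rᵐᵒᵖ] M :=
    { toFun := fun f => MulOpposite.op (f PUnit.unit) • x
      map_add' := fun f₁ f₂ => by simp [add_smul]
      map_smul' := fun c f => by
        simp only [Finsupp.smul_apply, RingHom.id_apply]
        rw [MulOpposite.smul_eq_mul_unop, MulOpposite.op_mul, MulOpposite.op_unop, mul_smul] }
  let φ₀ : Rᵐᵒᵖ →ₗ[Rᵐᵒᵖ] (PUnit.{v+1} →₀ R) :=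
    { toFun := fun c => Finsupp.single PUnit.unit (g * c.unop)
      map_add' := fun c₁ c₂ => by simp [mul_add, Finsupp.single_add]
      map_smul' := fun c c' => by
        simp only [smul_eq_mul, MulOpposite.unop_mul, RingHom.id_apply, Finsupp.smul_single,
          MulOpposite.smul_eq_mul_unop, mul_assoc] }
  set ρ := LinearMap.toSpanSingleton Rᵐᵒᵖ M x with hρ
  have hle : LinearMap.ker ρ ≤ LinearMap.ker φ₀ := by
    intro c hc'
    have h0 : MulOpposite.op c.unop • x = 0 := by
      have := LinearMap.mem_ker.mp hc'
      rwa [hρ, LinearMap.toSpanSingleton_apply, ← MulOpposite.op_unop c] at this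
    have hg0 := hker c.unop h0
    simp only [LinearMap.mem_ker, φ₀, LinearMap.coe_mk, AddHom.coe_mk, hg0,
      Finsupp.single_zero]
  have eq1 : Submodule.span Rᵐᵒᵖ ({x} : Set M) = LinearMap.range ρ :=
    LinearMap.span_singleton_eq_range Rᵐᵒᵖ M x
  refine ⟨PUnit,
    (Submodule.liftQ _ φ₀ hle) ∘ₗ (ρ.quotKerEquivRange.symm.toLinearMap) ∘ₗ
      (LinearEquiv.ofEq _ _ eq1).toLinearMap, π, ?_⟩
  intro n
  obtain ⟨c, hc'⟩ : (n : M) ∈ LinearMap.range ρ := eq1 ▸ n.2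
  have h2 : (LinearEquiv.ofEq _ _ eq1) n = ⟨ρ c, LinearMap.mem_range_self ρ c⟩ := by
    apply Subtype.ext
    simp [hc']
  simp only [LinearMap.comp_apply, LinearEquiv.coe_toLinearMap, h2,
    LinearMap.quotKerEquivRange_symm_apply_image, Submodule.liftQ_apply]
  show MulOpposite.op ((Finsupp.single PUnit.unit (g * c.unop)) PUnit.unit) • x = (n : M)
  rw [Finsupp.single_eq_same, MulOpposite.op_mul, MulOpposite.op_unop, mul_smul, hgx]
  rw [← hc', hρ, LinearMap.toSpanSingleton_apply]

set_option maxHeartbeats 1000000 in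
private lemma sp_to_content {R : Type u} [Ring R] {M : Type v} [AddCommGroup M]
    [Module Rᵐᵒᵖ M] (hvnr : ∀ a : R, ∃ b : R, a * b * a = a) (x : M)
    (hsp : ∃ (ι : Type v) (φ : (Submodule.span Rᵐᵒᵖ ({x} : Set M)) →ₗ[Rᵐᵒᵖ] (ι →₀ R))
      (π : (ι →₀ R) →ₗ[Rᵐᵒᵖ] M), ∀ n : (Submodule.span Rᵐᵒᵖ ({x} : Set M)), π (φ n) = (n : M)) :
    x ∈ Set.rightSmulAddSubgroup (contentSet R x) M := by
  classical
  obtain ⟨ι, φ, π, hπφ⟩ := hsp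
  have hxmem : x ∈ Submodule.span Rᵐᵒᵖ ({x} : Set M) := Submodule.mem_span_singleton_self x
  set X : Submodule.span Rᵐᵒᵖ ({x} : Set M) := ⟨x, hxmem⟩ with hX
  set f := φ X with hf
  have hrange : Set.range ⇑f ⊆ contentSet R x := by
    rintro _ ⟨i, rfl⟩
    rw [mem_contentSet']
    intro B hB
    obtain ⟨g, hgB, hgx⟩ := key_lemma' hvnr hB
    have hg : g ∈ B := hgB B subset_rfl
    have hXg : (MulOpposite.op g : Rᵐᵒᵖ) • X = X := by
      apply Subtype.ext
      simpa using hgx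
    have hfg : MulOpposite.op g • f = f := by rw [hf, ← map_smul, hXg]
    have hfig : f i * g = f i := by
      conv_rhs => rw [← hfg]
      simp [MulOpposite.smul_eq_mul_unop]
    rw [← hfig]
    exact Ideal.mul_mem_left B (f i) hg
  have hxf : x ∈ Set.rightSmulAddSubgroup (Set.range ⇑f) M := by
    have hx' : x = π f := by rw [hf, hπφ X]
    have hsum : π f = f.sum fun i r => MulOpposite.op r • π (Finsupp.single i 1) := by
      conv_lhs => rw [← Finsupp.sum_single f]
      rw [map_finsuppSum]
      apply Finsupp.sum_congr
      intro i _
      rw [← map_smul]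
      congr 1
      rw [Finsupp.smul_single]
      congr 1
      simp [MulOpposite.smul_eq_mul_unop]
    rw [hx', hsum]
    refine AddSubgroup.sum_mem _ fun i _ => AddSubgroup.subset_closure ⟨f i, ⟨i, rfl⟩, _, rfl⟩
  exact rightSmul_mono' hrange hxf

/-- over a von Neumann regular ring `R`, a right `R`-module is a content module
if and only if it is singly projective. -/
theorem content_iff_singlyProjective_of_vonNeumannRegular (R : Type u) [Ring R]
    (hvnr : ∀ a : R, ∃ b : R, a * b * a = a) (M : Type v) [AddCommGroup M] [Module Rᵐᵒᵖ M] :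
    IsContentModule R M ↔ SinglyProjective R M := by
  constructor
  · intro hc x
    exact content_to_sp hvnr x (hc x)
  · intro hsp x
    exact sp_to_content hvnr x (hsp x)
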